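/- Let eta be an ordinal with 2^eta = eta and h any ordinal. Define an ordinal alpha to be (eta,h)-complete if for all k < eta: k ◁ alpha iff eta*h + k ◁ alpha (ordinal multiplication and addition). Then for any finite set E of fixed points eta_i = 2^{eta_i}, any finite set H of ordinals, and any ordinal beta, there exists an ordinal alpha with L_beta ⊆ L_alpha which is (eta_i, h_j)-complete for all eta_i ∈ E and h_j ∈ H. -/

import Mathlib

open scoped Classical symmDiff

/-- `Lset α` is the finite set of exponents appearing in the base-2 Cantor
normal form of the ordinal `α`. -/
noncomputable def Lset (α : Ordinal) : Finset Ordinal :=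
  ((Ordinal.CNF 2 α).map Prod.fst).toFinset

/-- Formal inclusion: `α ⊑ β` iff `L_α ⊆ L_β`. -/
def fincl (α β : Ordinal) : Prop := Lset α ⊆ Lset β

/-- Formal membership: `β ◁ α` iff `2^β` appears in the base-2 normal form of `α`. -/
def fmem (β α : Ordinal) : Prop := β ∈ Lset α

/-- `α` is `(η,h)`-complete if for all `k < η`, `k ◁ α ↔ η*h + k ◁ α`. -/
def IsEtaHComplete (η h α : Ordinal) : Prop :=
  ∀ k < η, (fmem k α ↔ fmem (η * h + k) α)

/-! ### Auxiliary machinery -/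

/-- Closure of `{x}` under taking remainders modulo elements of `D`. -/
noncomputable def modCl (D : Finset Ordinal) (x : Ordinal) : Finset Ordinal :=
  insert x (D.attach.biUnion fun d =>
    if h : x % d.1 < x then modCl D (x % d.1) else ∅)
termination_by x

lemma modCl_self (D : Finset Ordinal) (x : Ordinal) : x ∈ modCl D x := by
  rw [modCl]; exact Finset.mem_insert_self _ _

lemma modCl_subset {D : Finset Ordinal} {x d : Ordinal} (hd : d ∈ D) (h : x % d < x) :
    modCl D (x % d) ⊆ modCl D x := by
  conv_rhs => rw [modCl]
  intro y hy
  refine Finset.mem_insert_of_mem (Finset.mem_biUnion.2 ⟨⟨d, hd⟩, Finset.mem_attach _ _, ?_⟩)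
  rw [dif_pos h]; exact hy

lemma modCl_mod (D : Finset Ordinal) (x : Ordinal) :
    ∀ y ∈ modCl D x, ∀ d ∈ D, y % d ∈ modCl D x := by
  induction x using Ordinal.induction with
  | h x IH =>
    intro y hy d hd
    rw [modCl] at hy
    rcases Finset.mem_insert.1 hy with rfl | hy
    · by_cases h : y % d < y
      · exact modCl_subset hd h (modCl_self D _)
      · rw [le_antisymm (Ordinal.mod_le y d) (not_lt.1 h)]
        exact modCl_self D _
    · rcases Finset.mem_biUnion.1 hy with ⟨d', _, hy'⟩
      by_cases h : x % d'.1 < x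
      · rw [dif_pos h] at hy'
        exact modCl_subset d'.2 h (IH _ h y hy' d hd)
      · rw [dif_neg h] at hy'; exact absurd hy' (Finset.notMem_empty _)

lemma Lset_zero : Lset 0 = ∅ := by simp [Lset]

/-- Every finite set of ordinals is the `Lset` of some ordinal. -/
lemma exists_Lset (F : Finset Ordinal) : ∃ α, Lset α = F := by
  induction F using Finset.strongInduction with
  | _ F IH =>
    rcases F.eq_empty_or_nonempty with rfl | hne
    · exact ⟨0, Lset_zero⟩
    · set m := F.max' hne with hm
      obtain ⟨α', hα'⟩ := IH (F.erase m) (Finset.erase_ssubset (F.max'_mem hne))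
      have h1 : (1:Ordinal) < 2 := one_lt_two
      have hlt : α' < 2 ^ m := by
        rcases eq_or_ne α' 0 with rfl | h0
        · exact Ordinal.opow_pos m (zero_lt_two)
        · rw [Ordinal.lt_opow_iff_log_lt h1 h0]
          have hmem : Ordinal.log 2 α' ∈ Lset α' := by
            simp [Lset, Ordinal.CNF.ne_zero h0]
          rw [hα'] at hmem
          exact lt_of_le_of_ne (F.le_max' _ (Finset.mem_of_mem_erase hmem))
            (Finset.ne_of_mem_erase hmem)
      have hne0 : (2:Ordinal) ^ m + α' ≠ 0 := by
        have := Ordinal.opow_pos m (zero_lt_two (α := Ordinal))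
        exact ne_of_gt (lt_of_lt_of_le this (le_self_add))
      have hCNF : Ordinal.CNF 2 (2 ^ m + α') = (m, 1) :: Ordinal.CNF 2 α' := by
        rw [Ordinal.CNF.ne_zero hne0]
        have hlog : Ordinal.log 2 (2 ^ m + α') = m := by
          have := Ordinal.log_opow_mul_add h1 one_ne_zero hlt
          simpa using this
        have hdiv : ((2:Ordinal) ^ m + α') / 2 ^ m = 1 := by
          conv_lhs => rw [show (2:Ordinal)^m + α' = 2^m * 1 + α' by rw [mul_one]]
          rw [Ordinal.mul_add_div _ (Ordinal.opow_ne_zero m two_ne_zero),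
            Ordinal.div_eq_zero_of_lt hlt, add_zero]
        have hmod : ((2:Ordinal) ^ m + α') % 2 ^ m = α' := by
          conv_lhs => rw [show (2:Ordinal)^m + α' = 2^m * 1 + α' by rw [mul_one]]
          rw [Ordinal.mul_add_mod_self, Ordinal.mod_eq_of_lt hlt]
        rw [hlog, hdiv, hmod]
      refine ⟨2 ^ m + α', ?_⟩
      have : Lset (2 ^ m + α') = insert m (Lset α') := by
        simp [Lset, hCNF]
      rw [this, hα', Finset.insert_erase (F.max'_mem hne)]

/-- One saturation step: add `η*h + s` for nonzero `h ∈ H'` and `s ∈ S` with `s < η`. -/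
noncomputable def stepF (H' : Finset Ordinal) (S : Finset Ordinal) (η : Ordinal) :
    Finset Ordinal :=
  S ∪ ((H'.erase 0) ×ˢ (S.filter (· < η))).image fun p => η * p.1 + p.2

lemma mem_stepF {H' S : Finset Ordinal} {η y : Ordinal} :
    y ∈ stepF H' S η ↔
      y ∈ S ∨ ∃ h, h ∈ H' ∧ h ≠ 0 ∧ ∃ s, s ∈ S ∧ s < η ∧ y = η * h + s := by
  simp only [stepF, Finset.mem_union, Finset.mem_image, Finset.mem_product,
    Finset.mem_erase, Finset.mem_filter, Prod.exists]
  constructor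
  · rintro (h | ⟨a, b, ⟨⟨ha0, ha⟩, hb, hb'⟩, rfl⟩)
    · exact Or.inl h
    · exact Or.inr ⟨a, ha, ha0, b, hb, hb', rfl⟩
  · rintro (h | ⟨a, ha, ha0, b, hb, hb', rfl⟩)
    · exact Or.inl h
    · exact Or.inr ⟨a, b, ⟨⟨ha0, ha⟩, hb, hb'⟩, rfl⟩

lemma subset_stepF (H' S : Finset Ordinal) (η : Ordinal) : S ⊆ stepF H' S η :=
  Finset.subset_union_left

lemma stepF_big {H' S : Finset Ordinal} {η y : Ordinal} (hy : y ∈ stepF H' S η) :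
    y ∈ S ∨ η ≤ y := by
  rcases mem_stepF.1 hy with h | ⟨h, _, h0, s, _, _, rfl⟩
  · exact Or.inl h
  · refine Or.inr ?_
    calc η = η * 1 := (mul_one η).symm
    _ ≤ η * h := mul_le_mul_right (Ordinal.one_le_iff_ne_zero.2 h0) η
    _ ≤ η * h + s := le_self_add

lemma subset_foldl (H' : Finset Ordinal) (L : List Ordinal) (S : Finset Ordinal) :
    S ⊆ L.foldl (stepF H') S := by
  induction L generalizing S with
  | nil => exact subset_refl _
  | cons a l ih => exact (subset_stepF H' S a).trans (ih _)

lemma foldl_big {H' : Finset Ordinal} {η : Ordinal} {L : List Ordinal}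
    (hL : ∀ η' ∈ L, η ≤ η') {S : Finset Ordinal} {y : Ordinal}
    (hy : y ∈ L.foldl (stepF H') S) : y ∈ S ∨ η ≤ y := by
  induction L generalizing S with
  | nil => exact Or.inl hy
  | cons a l ih =>
    rcases ih (fun x hx => hL x (List.mem_cons_of_mem a hx)) hy with h | h
    · rcases stepF_big h with h' | h'
      · exact Or.inl h'
      · exact Or.inr ((hL a (List.mem_cons_self)).trans h')
    · exact Or.inr h

/-- down-closedness of `S` under remainders modulo elements of `E` -/
def DC (E S : Finset Ordinal) : Prop := ∀ y ∈ S, ∀ η ∈ E, y % η ∈ S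

lemma mod_big {η c h s : Ordinal} (hc : c ≠ 0) (hs : s < η) :
    (η * h + s) % (η * c) = η * (h % c) + s := by
  have h1 : η * h + s = (η * c) * (h / c) + (η * (h % c) + s) := by
    rw [← add_assoc, mul_assoc, ← mul_add, Ordinal.div_add_mod]
  rw [h1, Ordinal.mul_add_mod_self, Ordinal.mod_eq_of_lt]
  calc η * (h % c) + s < η * (h % c) + η := (add_lt_add_iff_left _).2 hs
    _ = η * (h % c + 1) := by rw [mul_add_one]
    _ ≤ η * c := by
        apply mul_le_mul_right
        rw [Ordinal.add_one_eq_succ, Order.succ_le_iff]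
        exact Ordinal.mod_lt h hc

lemma dvd_of_fix {η η' : Ordinal} (h2 : (2:Ordinal) ^ η = η) (h2' : (2:Ordinal) ^ η' = η')
    (hle : η ≤ η') : η * 2 ^ (η' - η) = η' := by
  calc η * 2 ^ (η' - η) = 2 ^ η * 2 ^ (η' - η) := by rw [h2]
    _ = 2 ^ (η + (η' - η)) := (Ordinal.opow_add _ _ _).symm
    _ = η' := by rw [Ordinal.add_sub_cancel_of_le hle, h2']

lemma DC_stepF {E C H' : Finset Ordinal} (hE : ∀ η ∈ E, (2:Ordinal) ^ η = η)
    (hC : ∀ η ∈ E, ∀ η' ∈ E, (2:Ordinal) ^ (η' - η) ∈ C)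
    (hH' : ∀ h ∈ H', ∀ c ∈ C, h % c ∈ H') {S : Finset Ordinal} (hS : DC E S)
    {η : Ordinal} (hη : η ∈ E) : DC E (stepF H' S η) := by
  intro y hy η' hη'
  rcases mem_stepF.1 hy with hy | ⟨h, hh, hne, s, hsS, hsη, rfl⟩
  · exact subset_stepF _ _ _ (hS y hy η' hη')
  · rcases le_or_gt η' η with hle | hlt
    · have hdvd : η' * 2 ^ (η - η') = η := dvd_of_fix (hE _ hη') (hE _ hη) hle
      have heq : (η * h + s) % η' = s % η' := by
        conv_lhs => rw [← hdvd]
        rw [mul_assoc, Ordinal.mul_add_mod_self]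
      rw [heq]
      exact subset_stepF _ _ _ (hS s hsS η' hη')
    · set c := (2:Ordinal) ^ (η' - η) with hc
      have hdvd : η * c = η' := dvd_of_fix (hE _ hη) (hE _ hη') hlt.le
      have hcne : c ≠ 0 := Ordinal.opow_ne_zero _ two_ne_zero
      have heq : (η * h + s) % η' = η * (h % c) + s := by
        rw [← hdvd]; exact mod_big hcne hsη
      rw [heq]
      rcases eq_or_ne (h % c) 0 with h0 | h0
      · rw [h0, mul_zero, zero_add]; exact subset_stepF _ _ _ hsS
      · exact mem_stepF.2 (Or.inr ⟨h % c, hH' h hh c (hC _ hη _ hη'), h0, s, hsS, hsη, rfl⟩)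

lemma DC_foldl {E C H' : Finset Ordinal} (hE : ∀ η ∈ E, (2:Ordinal) ^ η = η)
    (hC : ∀ η ∈ E, ∀ η' ∈ E, (2:Ordinal) ^ (η' - η) ∈ C)
    (hH' : ∀ h ∈ H', ∀ c ∈ C, h % c ∈ H') {L : List Ordinal} (hL : ∀ x ∈ L, x ∈ E)
    {S : Finset Ordinal} (hS : DC E S) : DC E (L.foldl (stepF H') S) := by
  induction L generalizing S with
  | nil => exact hS
  | cons a l ih =>
    exact ih (fun x hx => hL x (List.mem_cons_of_mem a hx))
      (DC_stepF hE hC hH' hS (hL a (List.mem_cons_self)))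

/-- For any finite set `E` of fixed points `η = 2^η`, any finite set `H` of
ordinals, and any `β`, there is an `α` with `L_β ⊆ L_α` which is
`(η,h)`-complete for all `η ∈ E`, `h ∈ H`. -/
theorem exists_complete (E H : Finset Ordinal) (β : Ordinal)
    (hE : ∀ η ∈ E, (2 : Ordinal) ^ η = η) :
    ∃ α : Ordinal, Lset β ⊆ Lset α ∧ ∀ η ∈ E, ∀ h ∈ H, IsEtaHComplete η h α := by
  classical
  -- the relevant "quotients"
  set C : Finset Ordinal := (E ×ˢ E).image (fun p => (2:Ordinal) ^ (p.2 - p.1)) with hCdef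
  have hC : ∀ η ∈ E, ∀ η' ∈ E, (2:Ordinal) ^ (η' - η) ∈ C := by
    intro η hη η' hη'
    exact Finset.mem_image.2 ⟨(η, η'), Finset.mem_product.2 ⟨hη, hη'⟩, rfl⟩
  -- closure of H under remainders mod elements of C
  set H' : Finset Ordinal := H.biUnion (modCl C) with hH'def
  have hHH' : H ⊆ H' := fun h hh => Finset.mem_biUnion.2 ⟨h, hh, modCl_self _ _⟩
  have hH' : ∀ h ∈ H', ∀ c ∈ C, h % c ∈ H' := by
    intro h hh c hc
    rcases Finset.mem_biUnion.1 hh with ⟨h₀, hh₀, hmem⟩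
    exact Finset.mem_biUnion.2 ⟨h₀, hh₀, modCl_mod C h₀ h hmem c hc⟩
  -- closure of Lset β under remainders mod elements of E
  set R : Finset Ordinal := (Lset β).biUnion (modCl E) with hRdef
  have hβR : Lset β ⊆ R := fun x hx => Finset.mem_biUnion.2 ⟨x, hx, modCl_self _ _⟩
  have hRdc : DC E R := by
    intro y hy η hη
    rcases Finset.mem_biUnion.1 hy with ⟨x, hx, hmem⟩
    exact Finset.mem_biUnion.2 ⟨x, hx, modCl_mod E x y hmem η hη⟩
  set L : List Ordinal := E.sort (· ≤ ·) with hLdef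
  have hLE : ∀ x ∈ L, x ∈ E := fun x hx => (Finset.mem_sort _).1 hx
  set S : Finset Ordinal := L.foldl (stepF H') R with hSdef
  have hSdc : DC E S := DC_foldl hE hC hH' hLE hRdc
  obtain ⟨α, hα⟩ := exists_Lset S
  refine ⟨α, ?_, ?_⟩
  · rw [hα]; exact hβR.trans (subset_foldl _ _ _)
  · intro η hη h hh k hk
    simp only [IsEtaHComplete, fmem, hα]
    rcases eq_or_ne h 0 with rfl | hne
    · rw [mul_zero, zero_add]
    constructor
    · intro hkS
      -- split the sorted list at η
      obtain ⟨l₁, l₂, hsplit⟩ := List.append_of_mem ((Finset.mem_sort (α := Ordinal) (· ≤ ·)).2 hη)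
      have hL2 : L = l₁ ++ η :: l₂ := hsplit
      have hsort : L.Pairwise (· ≤ ·) := Finset.pairwise_sort _ _
      have h₂ : ∀ x ∈ l₂, η ≤ x := by
        have hsub : (η :: l₂).Sublist L := by
          rw [hL2]; exact List.sublist_append_right l₁ _
        have := (List.pairwise_cons.1 (hsort.sublist hsub)).1
        exact this
      have hfold : S = l₂.foldl (stepF H') (stepF H' (l₁.foldl (stepF H') R) η) := by
        rw [hSdef, hL2, List.foldl_append, List.foldl_cons]
      set S₁ := l₁.foldl (stepF H') R with hS₁
      have hk1 : k ∈ stepF H' S₁ η :=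
        (foldl_big h₂ (hfold ▸ hkS)).resolve_right (not_le.2 hk)
      have hk2 : k ∈ S₁ := (stepF_big hk1).resolve_right (not_le.2 hk)
      have hup : η * h + k ∈ stepF H' S₁ η :=
        mem_stepF.2 (Or.inr ⟨h, hHH' hh, hne, k, hk2, hk, rfl⟩)
      rw [hfold]
      exact subset_foldl _ _ _ hup
    · intro hy
      have := hSdc _ hy η hη
      rwa [show η * h + k = η * h + k from rfl, Ordinal.mul_add_mod_self,
        Ordinal.mod_eq_of_lt hk] at this
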